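/- Let n ≥ 2, δ ∈ (0,1), ρ ≥ 2, and m ≤ n, and let v_1, …, v_m ∈ ℝ^d satisfy the ℓ₂² triangle inequalities ‖v_x − v_z‖² ≤ ‖v_x − v_y‖² + ‖v_y − v_z‖² for all x,y,z ∈ [m]. Let S be a sequence of ⌈100·δ^{−2}·log n⌉ indices sampled independently and uniformly at random from [m], and define V* = { s ∈ S : |{j ∈ [m] : ‖v_s − v_j‖² ≤ ρδ}| ≥ 10·δ²·n }. Then with probability at least 1 − 1/n, every i ∈ [m] with |{j ∈ [m] : ‖v_i − v_j‖² ≤ δ}| ≥ 10·δ²·n satisfies ‖v_i − v_s‖² ≤ ρδ for some s ∈ V*. (Consequently, the set of vertices mapped to (*) by the procedure contains no vertex whose δ-ball holds at least 10δ²n points, while every s ∈ V* has at least 10δ²n points in its ρδ-ball.) -/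

import Mathlib

open MeasureTheory
open scoped ENNReal

/-- The uniform distribution on `Fin m` (for `0 < m`). -/
noncomputable abbrev unif (m : ℕ) (h : 0 < m) : Measure (Fin m) :=
  (@PMF.uniformOfFintype (Fin m) _ ⟨⟨0, h⟩⟩).toMeasure

/-- The law of a sequence of `K` independent uniform samples from `[m]`. -/
noncomputable def sampleMeasure (m K : ℕ) (h : 0 < m) : Measure (Fin K → Fin m) :=
  Measure.pi fun _ => unif m h

lemma unif_apply (m : ℕ) (h : 0 < m) (B : Set (Fin m)) :
    unif m h B = (B.ncard : ℝ≥0∞) / m := by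
  classical
  haveI : Nonempty (Fin m) := ⟨⟨0, h⟩⟩
  rw [PMF.toMeasure_uniformOfFintype_apply _ B.to_countable.measurableSet,
    Fintype.card_fin, ← Nat.card_coe_set_eq, Nat.card_eq_fintype_card]

lemma sample_all (m K : ℕ) (h : 0 < m) (B : Set (Fin m)) :
    sampleMeasure m K h {ω | ∀ s, ω s ∈ B} = (unif m h B) ^ K := by
  have hset : {ω : Fin K → Fin m | ∀ s, ω s ∈ B} = Set.pi Set.univ (fun _ => B) := by
    ext ω; simp [Set.mem_pi]
  rw [hset, sampleMeasure, Measure.pi_pi]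
  simp

lemma real_bound (n : ℕ) (hn : 2 ≤ n) (δ : ℝ) (hδ0 : 0 < δ) (hx : 10 * δ ^ 2 ≤ 1) :
    (n : ℝ) * (1 - 10 * δ ^ 2) ^ (Nat.ceil (100 * δ⁻¹ ^ 2 * Real.log n)) ≤ (n : ℝ)⁻¹ := by
  set K := Nat.ceil (100 * δ⁻¹ ^ 2 * Real.log n) with hKdef
  set x := 10 * δ ^ 2 with hxdef
  have hx0 : 0 < x := by positivity
  have hn1 : (1 : ℝ) ≤ n := by exact_mod_cast hn.trans' (by norm_num)
  have hlog : 0 ≤ Real.log n := Real.log_nonneg hn1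
  have h1 : (1 - x) ^ K ≤ Real.exp (-x) ^ K :=
    pow_le_pow_left₀ (by linarith) (by linarith [Real.add_one_le_exp (-x)]) K
  have h2 : Real.exp (-x) ^ K = Real.exp (-(x * K)) := by
    rw [← Real.exp_nat_mul]; ring_nf
  have hKge : (100 * δ⁻¹ ^ 2 * Real.log n) ≤ (K : ℝ) := Nat.le_ceil _
  have h3 : 2 * Real.log n ≤ x * K := by
    have : x * (100 * δ⁻¹ ^ 2 * Real.log n) ≤ x * K :=
      mul_le_mul_of_nonneg_left hKge hx0.le
    have heq : x * (100 * δ⁻¹ ^ 2 * Real.log n) = 1000 * Real.log n := by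
      rw [hxdef]; field_simp; ring
    nlinarith
  have h4 : Real.exp (-(x * K)) ≤ Real.exp (-(2 * Real.log n)) :=
    Real.exp_le_exp.mpr (by linarith)
  have h5 : Real.exp (-(2 * Real.log n)) = ((n : ℝ) ^ 2)⁻¹ := by
    rw [Real.exp_neg]
    congr 1
    rw [show (2 : ℝ) * Real.log n = ((2 : ℕ) : ℝ) * Real.log n by norm_num,
      Real.exp_nat_mul, Real.exp_log (by linarith)]
  have hnpos : (0 : ℝ) < n := by linarith
  calc (n : ℝ) * (1 - x) ^ K ≤ (n : ℝ) * ((n : ℝ) ^ 2)⁻¹ := by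
        apply mul_le_mul_of_nonneg_left _ hnpos.le
        rw [← h5]
        exact h1.trans (h2 ▸ h4)
    _ = (n : ℝ)⁻¹ := by field_simp

/-- correctness of the randomized heavy-vertex identification subroutine.
With probability ≥ 1 − 1/n, every vertex whose δ-ball (squared distance) contains at least
10δ²n points lies within squared distance ρδ of a sampled point whose ρδ-ball contains at
least 10δ²n points (an approximate heavy center in V*). -/
theorem stmt_10 (n m d : ℕ) (hn : 2 ≤ n) (hm : 0 < m) (hmn : m ≤ n)
    (δ ρ : ℝ) (hδ0 : 0 < δ) (hδ1 : δ < 1) (hρ : 2 ≤ ρ)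
    (v : Fin m → EuclideanSpace ℝ (Fin d))
    (htri : ∀ x y z : Fin m, ‖v x - v z‖ ^ 2 ≤ ‖v x - v y‖ ^ 2 + ‖v y - v z‖ ^ 2) :
    1 - ((n : ℝ≥0∞))⁻¹ ≤
      sampleMeasure m (Nat.ceil (100 * δ⁻¹ ^ 2 * Real.log n)) hm
        {ω | ∀ i : Fin m,
          10 * δ ^ 2 * (n : ℝ) ≤ (({j : Fin m | ‖v i - v j‖ ^ 2 ≤ δ}).ncard : ℝ) →
          ∃ s, (10 * δ ^ 2 * (n : ℝ) ≤
                  (({j : Fin m | ‖v (ω s) - v j‖ ^ 2 ≤ ρ * δ}).ncard : ℝ)) ∧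
            ‖v i - v (ω s)‖ ^ 2 ≤ ρ * δ} := by
  classical
  set K := Nat.ceil (100 * δ⁻¹ ^ 2 * Real.log n) with hKdef
  set μ := sampleMeasure m K hm with hμ
  haveI : Nonempty (Fin m) := ⟨⟨0, hm⟩⟩
  haveI hprob : IsProbabilityMeasure μ := by
    rw [hμ, sampleMeasure]; infer_instance
  set B : Fin m → Set (Fin m) := fun i => {j | ‖v i - v j‖ ^ 2 ≤ δ} with hB
  set heavy : Fin m → Prop := fun i => 10 * δ ^ 2 * (n : ℝ) ≤ ((B i).ncard : ℝ) with hheavy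
  set E : Set (Fin K → Fin m) := {ω | ∀ i : Fin m,
          10 * δ ^ 2 * (n : ℝ) ≤ (({j : Fin m | ‖v i - v j‖ ^ 2 ≤ δ}).ncard : ℝ) →
          ∃ s, (10 * δ ^ 2 * (n : ℝ) ≤
                  (({j : Fin m | ‖v (ω s) - v j‖ ^ 2 ≤ ρ * δ}).ncard : ℝ)) ∧
            ‖v i - v (ω s)‖ ^ 2 ≤ ρ * δ} with hE
  set G : Set (Fin K → Fin m) := {ω | ∀ i, heavy i → ∃ s, ω s ∈ B i} with hG
  have hδρ : δ ≤ ρ * δ := by nlinarith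
  have hGE : G ⊆ E := by
    intro ω hω i hi
    obtain ⟨s, hs⟩ := hω i hi
    have hsδ : ‖v i - v (ω s)‖ ^ 2 ≤ δ := hs
    refine ⟨s, ?_, hsδ.trans hδρ⟩
    have hsub : B i ⊆ {j : Fin m | ‖v (ω s) - v j‖ ^ 2 ≤ ρ * δ} := by
      intro j hj
      have h1 : ‖v (ω s) - v j‖ ^ 2 ≤ ‖v (ω s) - v i‖ ^ 2 + ‖v i - v j‖ ^ 2 := htri _ _ _
      have h2 : ‖v (ω s) - v i‖ = ‖v i - v (ω s)‖ := norm_sub_rev _ _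
      have hj' : ‖v i - v j‖ ^ 2 ≤ δ := hj
      rw [h2] at h1
      have : ‖v (ω s) - v j‖ ^ 2 ≤ 2 * δ := by linarith
      have h2δ : 2 * δ ≤ ρ * δ := by nlinarith
      exact le_trans this h2δ
    have hc : (B i).ncard ≤ ({j : Fin m | ‖v (ω s) - v j‖ ^ 2 ≤ ρ * δ}).ncard :=
      Set.ncard_le_ncard hsub (Set.toFinite _)
    exact le_trans hi (by exact_mod_cast hc)
  have hmeasG : MeasurableSet G := G.to_countable.measurableSet
  -- bound on the complement
  have key : μ Gᶜ ≤ ((n : ℝ≥0∞))⁻¹ := by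
    have hGc : Gᶜ ⊆ ⋃ i ∈ Finset.univ.filter heavy, {ω : Fin K → Fin m | ∀ s, ω s ∈ (B i)ᶜ} := by
      intro ω hω
      simp only [hG, Set.mem_compl_iff, Set.mem_setOf_eq] at hω
      push_neg at hω
      obtain ⟨i, hi, hni⟩ := hω
      refine Set.mem_iUnion.mpr ⟨i, Set.mem_iUnion.mpr ⟨by simp [hi], fun s => hni s⟩⟩
    have hsum : μ Gᶜ ≤ ∑ i ∈ Finset.univ.filter heavy, μ {ω : Fin K → Fin m | ∀ s, ω s ∈ (B i)ᶜ} :=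
      (measure_mono hGc).trans (measure_biUnion_finset_le _ _)
    by_cases hx : 10 * δ ^ 2 ≤ 1
    · -- main case
      have hterm : ∀ i ∈ Finset.univ.filter heavy,
          μ {ω : Fin K → Fin m | ∀ s, ω s ∈ (B i)ᶜ} ≤ ENNReal.ofReal ((1 - 10 * δ ^ 2) ^ K) := by
        intro i hi
        rw [Finset.mem_filter] at hi
        have hheavyi : 10 * δ ^ 2 * (n : ℝ) ≤ ((B i).ncard : ℝ) := hi.2
        rw [hμ, sample_all, unif_apply]
        have hcompl : ((B i)ᶜ.ncard : ℝ) ≤ (1 - 10 * δ ^ 2) * m := by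
          have hadd : (B i).ncard + (B i)ᶜ.ncard = m := by
            rw [Set.ncard_add_ncard_compl, Nat.card_eq_fintype_card, Fintype.card_fin]
          have hmn' : (m : ℝ) ≤ n := by exact_mod_cast hmn
          have : ((B i)ᶜ.ncard : ℝ) = m - (B i).ncard := by
            have := congrArg (Nat.cast (R := ℝ)) hadd
            push_cast at this
            linarith
          nlinarith
        have hq : ((B i)ᶜ.ncard : ℝ≥0∞) / m ≤ ENNReal.ofReal (1 - 10 * δ ^ 2) := by
          rw [show ((B i)ᶜ.ncard : ℝ≥0∞) / m
              = ENNReal.ofReal (((B i)ᶜ.ncard : ℝ) / m) by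
            rw [ENNReal.ofReal_div_of_pos (by exact_mod_cast hm)]
            congr 1 <;> simp]
          apply ENNReal.ofReal_le_ofReal
          rw [div_le_iff₀ (by exact_mod_cast hm)]
          linarith
        calc (((B i)ᶜ.ncard : ℝ≥0∞) / m) ^ K
            ≤ (ENNReal.ofReal (1 - 10 * δ ^ 2)) ^ K := pow_le_pow_left' hq K
          _ = ENNReal.ofReal ((1 - 10 * δ ^ 2) ^ K) :=
              (ENNReal.ofReal_pow (by linarith) K).symm
      have hcard : ((Finset.univ.filter heavy).card : ℝ≥0∞) ≤ (n : ℝ≥0∞) := by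
        have h1 : (Finset.univ.filter heavy).card ≤ m :=
          le_trans (Finset.card_filter_le _ _) (by simp)
        exact_mod_cast le_trans h1 hmn
      calc μ Gᶜ ≤ ∑ i ∈ Finset.univ.filter heavy, μ {ω : Fin K → Fin m | ∀ s, ω s ∈ (B i)ᶜ} := hsum
        _ ≤ ∑ _i ∈ Finset.univ.filter heavy, ENNReal.ofReal ((1 - 10 * δ ^ 2) ^ K) :=
            Finset.sum_le_sum hterm
        _ = ((Finset.univ.filter heavy).card : ℝ≥0∞) * ENNReal.ofReal ((1 - 10 * δ ^ 2) ^ K) := by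
            rw [Finset.sum_const, nsmul_eq_mul]
        _ ≤ (n : ℝ≥0∞) * ENNReal.ofReal ((1 - 10 * δ ^ 2) ^ K) :=
            mul_le_mul_left hcard _
        _ = ENNReal.ofReal ((n : ℝ) * (1 - 10 * δ ^ 2) ^ K) := by
            rw [ENNReal.ofReal_mul (by positivity), ENNReal.ofReal_natCast]
        _ ≤ ENNReal.ofReal ((n : ℝ)⁻¹) :=
            ENNReal.ofReal_le_ofReal (real_bound n hn δ hδ0 hx)
        _ = ((n : ℝ≥0∞))⁻¹ := by
            rw [ENNReal.ofReal_inv_of_pos (by positivity), ENNReal.ofReal_natCast]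
    · -- degenerate case: no heavy vertices
      have hempty : Finset.univ.filter heavy = ∅ := by
        rw [Finset.filter_eq_empty_iff]
        intro i _
        intro hi
        have h1 : (B i).ncard ≤ m := by
          have := Set.ncard_le_ncard (Set.subset_univ (B i)) (Set.toFinite _)
          rwa [Set.ncard_univ, Nat.card_eq_fintype_card, Fintype.card_fin] at this
        have hmn' : ((B i).ncard : ℝ) ≤ n := by
          exact_mod_cast le_trans h1 hmn
        have hnpos : (0 : ℝ) < n := by positivity
        nlinarith
      rw [hempty, Finset.sum_empty] at hsum
      exact hsum.trans zero_le
  -- conclude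
  have h1G : 1 - μ Gᶜ ≤ μ G := by
    have hadd : μ G + μ Gᶜ = 1 := by
      rw [measure_add_measure_compl hmeasG, measure_univ]
    rw [tsub_le_iff_right]
    rw [hadd]
  calc 1 - ((n : ℝ≥0∞))⁻¹ ≤ 1 - μ Gᶜ := tsub_le_tsub_left key 1
    _ ≤ μ G := h1G
    _ ≤ μ E := measure_mono hGE
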